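/- Let g be a finite-dimensional simple Lie algebra over ℂ with a ℤ/nℤ-grading g = ⊕_{i ∈ ℤ/nℤ} g_i, let j ∈ ℤ/nℤ be a unit of the ring ℤ/nℤ, and let h ∈ g_j be an ad-semisimple element such that [x, h] = 0 for all x ∈ g_0. Then h = 0. -/

import Mathlib

/-- Let `L` be a finite-dimensional simple complex Lie algebra with a
`ℤ/nℤ`-grading `V`, let `j : ZMod n` be a unit of the ring `ZMod n`, and let `h ∈ V j`
be ad-semisimple with `⁅x, h⁆ = 0` for all `x ∈ V 0`.  Then `h = 0`. -/
theorem semisimple_zero_if_unit_grade {n : ℕ}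
    {L : Type} [LieRing L] [LieAlgebra ℂ L]
    [FiniteDimensional ℂ L] [LieAlgebra.IsSimple ℂ L]
    (V : ZMod n → Submodule ℂ L)
    (hVinternal : DirectSum.IsInternal V)
    (hVbracket : ∀ i j : ZMod n, ∀ x ∈ V i, ∀ y ∈ V j, ⁅x, y⁆ ∈ V (i + j))
    (j : ZMod n) (hj : IsUnit j) (h : L) (hh : h ∈ V j)
    (hss : Module.End.IsSemisimple (LieAlgebra.ad ℂ L h))
    (hcent0 : ∀ x ∈ V 0, ⁅x, h⁆ = 0) :
    h = 0 := by
  set f := LieAlgebra.ad ℂ L h with hfdef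
  -- Step 1: `f (f w) = 0 → f w = 0`, from semisimplicity.
  have key : ∀ w : L, f (f w) = 0 → f w = 0 := by
    intro w hw
    have h2 : w ∈ f.genEigenspace 0 ((2 : ℕ) : ℕ∞) := by
      rw [Module.End.mem_genEigenspace_nat]
      simpa [pow_two] using hw
    rw [(hss.isFinitelySemisimple).genEigenspace_eq_eigenspace 0 (by norm_num)] at h2
    simpa using h2
  -- f maps V i into V (i + j)
  have fmaps : ∀ i : ZMod n, ∀ x ∈ V i, f x ∈ V (i + j) := by
    intro i x hx
    have : ⁅h, x⁆ ∈ V (j + i) := hVbracket j i h hh x hx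
    rw [add_comm] at this
    simpa [hfdef] using this
  -- the predicate: V i is killed by f
  set Q : ZMod n → Prop := fun i => ∀ x ∈ V i, f x = 0 with hQdef
  have step : ∀ i : ZMod n, Q (i + j) → Q i := by
    intro i hQ x hx
    exact key x (hQ (f x) (fmaps i x hx))
  have chain : ∀ (k : ℕ) (i : ZMod n), Q (i + k • j) → Q i := by
    intro k
    induction k with
    | zero => intro i hQ; simpa using hQ
    | succ k ih =>
      intro i hQ
      refine step i (ih (i + j) ?_)
      have : i + j + k • j = i + (k + 1) • j := by
        simp only [nsmul_eq_mul, Nat.cast_add, Nat.cast_one]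
        ring
      rwa [this]
  have allQ : ∀ i : ZMod n, Q i := by
    intro i
    rcases eq_or_ne n 0 with rfl | hn
    · -- ℤ-grading case: go to a degree where V is trivial.
      have hindep : iSupIndep V := hVinternal.submodule_iSupIndep
      have hSfin : Set.Finite {m : ZMod 0 | V m ≠ ⊥} :=
        WellFoundedGT.finite_ne_bot_of_iSupIndep hindep
      have hinj : Function.Injective (fun k : ℕ => i + (k : ℕ) • j) := by
        intro a b hab
        simp only [nsmul_eq_mul, add_right_inj] at hab
        have : j * (a : ZMod 0) = j * (b : ZMod 0) := by
          rw [mul_comm, hab, mul_comm]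
        have := hj.mul_left_cancel this
        exact_mod_cast this
      have hpre : Set.Finite {k : ℕ | V (i + (k : ℕ) • j) ≠ ⊥} := by
        have := Set.Finite.preimage hinj.injOn hSfin
        simpa using this
      obtain ⟨k, hk⟩ := hpre.infinite_compl.nonempty
      simp only [Set.mem_compl_iff, Set.mem_setOf_eq, not_not] at hk
      refine chain k i ?_
      intro x hx
      rw [hk, Submodule.mem_bot] at hx
      simp [hx]
    · haveI : NeZero n := ⟨hn⟩
      obtain ⟨b, hb⟩ := isUnit_iff_exists_inv.mp hj
      have hQ0 : Q 0 := by
        intro x hx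
        have h1 : ⁅h, x⁆ = 0 := by rw [← lie_skew, hcent0 x hx, neg_zero]
        simpa [hfdef] using h1
      refine chain ((-i) * b).val i ?_
      have hcast : (((((-i) * b).val : ℕ)) : ZMod n) = (-i) * b := by
        simp [ZMod.natCast_val, ZMod.cast_id]
      have : i + ((-i) * b).val • j = 0 := by
        rw [nsmul_eq_mul, hcast]
        have hbj : b * j = 1 := by rw [mul_comm]; exact hb
        calc i + -i * b * j = i + -i * (b * j) := by ring
          _ = 0 := by rw [hbj]; ring
      rwa [this]
  -- conclude: ad h = 0
  have hker : ∀ x : L, f x = 0 := by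
    intro x
    have hx : x ∈ (⊤ : Submodule ℂ L) := Submodule.mem_top
    rw [← hVinternal.submodule_iSup_eq_top] at hx
    have : (⨆ i, V i) ≤ LinearMap.ker f := by
      refine iSup_le ?_
      intro i y hy
      exact LinearMap.mem_ker.mpr (allQ i y hy)
    exact LinearMap.mem_ker.mp (this hx)
  -- h is central, hence zero by simplicity
  have hc : h ∈ LieAlgebra.center ℂ L := by
    intro x
    have hx0 : ⁅h, x⁆ = 0 := by have := hker x; rwa [hfdef, LieAlgebra.ad_apply] at this
    rw [← lie_skew, hx0, neg_zero]
  rw [LieAlgebra.center_eq_bot ℂ L] at hc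
  exact hc
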